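/- A k-polymatroid ρ on ground set E = {e} is an excluded minor for the class of k-polymatroids whose k-natural matroid avoids U_{a,b} and U_{b−a,b} (b ≥ 2a, k ≥ 2(b−a)) if and only if a ≤ ρ({e}) ≤ k − a. -/

import Mathlib

/-- A finite matroid given by its rank function on a finite ground set. -/
structure FinMatroid (α : Type*) [DecidableEq α] where
  E : Finset α
  r : Finset α → ℕ
  r_le_card : ∀ ⦃X⦄, X ⊆ E → r X ≤ X.card
  mono : ∀ ⦃X Y⦄, X ⊆ Y → Y ⊆ E → r X ≤ r Y
  submod : ∀ ⦃X⦄, X ⊆ E → ∀ ⦃Y⦄, Y ⊆ E → r (X ∪ Y) + r (X ∩ Y) ≤ r X + r Y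

namespace FinMatroid
variable {α : Type*} [DecidableEq α]

/-- The nullity `η(M) = |E| - r(M)`. -/
def nullity (M : FinMatroid α) : ℕ := M.E.card - M.r M.E

/-- `M` has a minor isomorphic to the uniform matroid `U_{a,b}`: one can contract a set `C`
and delete a disjoint set `D` so that the resulting minor has `b` elements and its rank
function is `X ↦ min |X| a` (which characterizes matroids isomorphic to `U_{a,b}`). -/
def HasUnifMinor (M : FinMatroid α) (a b : ℕ) : Prop :=
  ∃ C D : Finset α, C ⊆ M.E ∧ D ⊆ M.E ∧ Disjoint C D ∧
    ((M.E \ C) \ D).card = b ∧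
    ∀ X ⊆ (M.E \ C) \ D, M.r (X ∪ C) - M.r C = min X.card a

end FinMatroid

/-- The uniform matroid of rank `m` on ground set `E`. -/
def unifM {α : Type*} [DecidableEq α] (m : ℕ) (E : Finset α) : FinMatroid α where
  E := E
  r X := min X.card m
  r_le_card := fun X _ => min_le_left _ _
  mono := fun X Y hXY _ => min_le_min (Finset.card_le_card hXY) le_rfl
  submod := by
    intro X _ Y _
    have h1 := Finset.card_union_add_card_inter X Y
    have h2 := Finset.card_le_card (Finset.inter_subset_left (s₁ := X) (s₂ := Y))
    have h3 := Finset.card_le_card (Finset.inter_subset_right (s₁ := X) (s₂ := Y))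
    have h4 := Finset.card_le_card (Finset.subset_union_left (s₁ := X) (s₂ := Y))
    have h5 := Finset.card_le_card (Finset.subset_union_right (s₁ := X) (s₂ := Y))
    simp only [min_def]
    split_ifs <;> omega

lemma unif_minor_bounds {α : Type*} [DecidableEq α] (a' b k m : ℕ) (E : Finset α)
    (hE : E.card = k) (h1 : 1 ≤ a') (h2 : a' < b)
    (h : (unifM m E).HasUnifMinor a' b) : a' ≤ m ∧ m ≤ k - b + a' := by
  obtain ⟨C, D, hC, hD, hCD, hcard, hrk⟩ := h
  have hDE : D ⊆ (unifM m E).E \ C := Finset.subset_sdiff.2 ⟨hD, hCD.symm⟩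
  have hcC : C.card ≤ k := hE ▸ Finset.card_le_card hC
  have h1' : ((unifM m E).E \ C).card = k - C.card := by
    rw [Finset.card_sdiff_of_subset hC]; simp [unifM, hE]
  have h2' : (((unifM m E).E \ C) \ D).card = k - C.card - D.card := by
    rw [Finset.card_sdiff_of_subset hDE, h1']
  have hGC : Disjoint (((unifM m E).E \ C) \ D) C :=
    Finset.sdiff_disjoint.mono_left Finset.sdiff_subset
  have key := hrk _ (Finset.Subset.refl _)
  simp only [unifM] at key
  have hGC' : Disjoint ((E \ C) \ D) C := hGC
  have hcard' : ((E \ C) \ D).card = b := hcard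
  rw [Finset.card_union_of_disjoint hGC', hcard'] at key
  have hdE : D.card ≤ k - C.card := h1' ▸ Finset.card_le_card hDE
  rw [h2'] at hcard
  omega

lemma unif_has_minor {α : Type*} [DecidableEq α] (a' b k m : ℕ) (E : Finset α)
    (hE : E.card = k) (h2 : a' ≤ b) (hbk : b ≤ k) (hma : a' ≤ m)
    (hmb : m ≤ k - b + a') : (unifM m E).HasUnifMinor a' b := by
  have hcle : m - a' ≤ k - b := by omega
  obtain ⟨C, hC, hCcard⟩ := Finset.exists_subset_card_eq (s := E) (n := m - a') (by omega)
  have h1' : (E \ C).card = k - (m - a') := by rw [Finset.card_sdiff_of_subset hC, hE, hCcard]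
  obtain ⟨D, hD, hDcard⟩ := Finset.exists_subset_card_eq (s := E \ C) (n := k - b - (m - a'))
    (by omega)
  have hDE : D ⊆ E := hD.trans Finset.sdiff_subset
  have hCD : Disjoint C D := (Finset.sdiff_disjoint.mono_left hD).symm
  refine ⟨C, D, hC, hDE, hCD, ?_, ?_⟩
  · have hD' : D ⊆ (unifM m E).E \ C := hD
    show (((unifM m E).E \ C) \ D).card = b
    rw [Finset.card_sdiff_of_subset hD', hDcard]
    show (E \ C).card - _ = b
    omega
  · intro X hX
    have hXG : X ⊆ (E \ C) \ D := hX
    have hXC : Disjoint X C :=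
      Finset.sdiff_disjoint.mono_left (hXG.trans Finset.sdiff_subset)
    have hXcard : X.card ≤ b := by
      have := Finset.card_le_card hXG
      rw [Finset.card_sdiff_of_subset hD, hDcard, h1'] at this
      omega
    show min (X ∪ C).card m - min C.card m = min X.card a'
    rw [Finset.card_union_of_disjoint hXC, hCcard]
    omega

/-- A singleton `k`-polymatroid of rank `m` (whose `k`-natural matroid is
`U_{m,k}`) is an excluded minor for the class of `k`-polymatroids whose `k`-natural
matroid avoids `U_{a,b}` and `U_{b-a,b}` (`b ≥ 2a`, `k ≥ 2(b-a)`) iff `a ≤ m ≤ k-a`: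
since its only proper minors are empty (hence in the class), this says `U_{m,k}` has a
`U_{a,b}`- or `U_{b-a,b}`-minor iff `a ≤ m ≤ k-a`. -/
theorem stmt18 {α : Type*} [DecidableEq α] (a b k m : ℕ) (E : Finset α)
    (hE : E.card = k) (ha : 1 ≤ a) (hb : 2 * a ≤ b) (hk : 2 * (b - a) ≤ k)
    (hm : m ≤ k) :
    ((unifM m E).HasUnifMinor a b ∨ (unifM m E).HasUnifMinor (b - a) b) ↔
      (a ≤ m ∧ m ≤ k - a) := by
  have hbk : b ≤ k := by omega
  constructor
  · rintro (h | h)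
    · have := unif_minor_bounds a b k m E hE ha (by omega) h
      omega
    · have := unif_minor_bounds (b - a) b k m E hE (by omega) (by omega) h
      omega
  · rintro ⟨h1, h2⟩
    by_cases hc : m ≤ k - b + a
    · exact Or.inl (unif_has_minor a b k m E hE (by omega) hbk h1 hc)
    · exact Or.inr (unif_has_minor (b - a) b k m E hE (by omega) hbk
        (by omega) (by omega))
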